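/- The system (A,C,𝒜) is practically observable if and only if it is observable; likewise, (A,C,𝒜) is practically constructible if and only if it is constructible. -/

import Mathlib

open Matrix Filter

/-- An automaton `𝒜 = (M, s)` with `N` nodes: transition matrix `M ∈ {0,1}^{N×N}`
and vector of node labels `s ∈ {0,1}^N`. -/
structure Automaton (N : ℕ) where
  M : Matrix (Fin N) (Fin N) Bool
  s : Fin N → Bool

/-- `σ ∈ ℒ(𝒜)`: the data loss signal `σ` is admissible with respect to `𝒜`. -/
def Automaton.Admissible {N : ℕ} (𝒜 : Automaton N) (σ : ℕ → Bool) : Prop :=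
  ∃ v : ℕ → Fin N, ∀ t : ℕ, 𝒜.M (v t) (v (t + 1)) = true ∧ σ t = 𝒜.s (v t)

/-- A finite word of length `r` generated by `𝒜` (only the first `r` letters of `w` matter). -/
def Automaton.AdmissibleWord {N : ℕ} (𝒜 : Automaton N) (r : ℕ) (w : ℕ → Bool) : Prop :=
  ∃ v : ℕ → Fin N, (∀ t : ℕ, t + 1 < r → 𝒜.M (v t) (v (t + 1)) = true) ∧
    ∀ t : ℕ, t < r → w t = 𝒜.s (v t)

/-- The reverse automaton `𝒜ʳ = (Mᵀ, s)`. -/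
def Automaton.rev {N : ℕ} (𝒜 : Automaton N) : Automaton N :=
  ⟨𝒜.M.transpose, 𝒜.s⟩

/-- Observability of the system `(A, C, 𝒜)`. -/
def Observable {N n p : ℕ} (A : Matrix (Fin n) (Fin n) ℝ) (C : Matrix (Fin p) (Fin n) ℝ)
    (𝒜 : Automaton N) : Prop :=
  ∀ σ : ℕ → Bool, 𝒜.Admissible σ → ∀ x₀ : Fin n → ℝ,
    (∀ t : ℕ, σ t = true → (C * A ^ t).mulVec x₀ = 0) → x₀ = 0

/-- Practical observability of the system `(A, C, 𝒜)`. -/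
def PracticallyObservable {N n p : ℕ} (A : Matrix (Fin n) (Fin n) ℝ)
    (C : Matrix (Fin p) (Fin n) ℝ) (𝒜 : Automaton N) : Prop :=
  ∃ T : ℕ, ∀ σ : ℕ → Bool, 𝒜.Admissible σ → ∀ x₀ : Fin n → ℝ,
    (∀ t : ℕ, t ≤ T → σ t = true → (C * A ^ t).mulVec x₀ = 0) → x₀ = 0

/-- Constructibility of the system `(A, C, 𝒜)`. -/
def Constructible {N n p : ℕ} (A : Matrix (Fin n) (Fin n) ℝ) (C : Matrix (Fin p) (Fin n) ℝ)
    (𝒜 : Automaton N) : Prop :=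
  ∀ σ : ℕ → Bool, 𝒜.Admissible σ → ∃ T : ℕ, ∀ x₀ : Fin n → ℝ,
    (∀ t : ℕ, t ≤ T → σ t = true → (C * A ^ t).mulVec x₀ = 0) → (A ^ T).mulVec x₀ = 0

/-- Practical constructibility of the system `(A, C, 𝒜)`. -/
def PracticallyConstructible {N n p : ℕ} (A : Matrix (Fin n) (Fin n) ℝ)
    (C : Matrix (Fin p) (Fin n) ℝ) (𝒜 : Automaton N) : Prop :=
  ∃ T : ℕ, ∀ σ : ℕ → Bool, 𝒜.Admissible σ → ∀ x₀ : Fin n → ℝ,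
    (∀ t : ℕ, t ≤ T → σ t = true → (C * A ^ t).mulVec x₀ = 0) → (A ^ T).mulVec x₀ = 0

/-- Detectability of the system `(A, C, 𝒜)`. -/
def Detectable {N n p : ℕ} (A : Matrix (Fin n) (Fin n) ℝ) (C : Matrix (Fin p) (Fin n) ℝ)
    (𝒜 : Automaton N) : Prop :=
  ∀ σ : ℕ → Bool, 𝒜.Admissible σ → ∀ x₀ : Fin n → ℝ,
    (∀ t : ℕ, σ t = true → (C * A ^ t).mulVec x₀ = 0) →
      Tendsto (fun t : ℕ => (A ^ t).mulVec x₀) atTop (nhds 0)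

/-- The observability matrix `O_σ(t) = [σ(0)C; σ(1)CA; ...; σ(t−1)CA^{t−1}]`
(blocks stacked vertically, block `i` is row-block `i`). -/
def obsMat {n p : ℕ} (A : Matrix (Fin n) (Fin n) ℝ) (C : Matrix (Fin p) (Fin n) ℝ)
    (σ : ℕ → Bool) (t : ℕ) : Matrix (Fin t × Fin p) (Fin n) ℝ :=
  fun ij k => if σ (ij.1 : ℕ) then (C * A ^ (ij.1 : ℕ)) ij.2 k else 0

/-- State trajectory of the system `x(t+1) = A x(t) + σ(t) B u(t)`. -/
def traj {n m : ℕ} (A : Matrix (Fin n) (Fin n) ℝ) (B : Matrix (Fin n) (Fin m) ℝ)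
    (σ : ℕ → Bool) (u : ℕ → Fin m → ℝ) (x₀ : Fin n → ℝ) : ℕ → Fin n → ℝ
  | 0 => x₀
  | t + 1 => A.mulVec (traj A B σ u x₀ t) + if σ t then B.mulVec (u t) else 0

/-- Controllability of the system `(A, B, 𝒜)`. -/
def Controllable {N n m : ℕ} (A : Matrix (Fin n) (Fin n) ℝ) (B : Matrix (Fin n) (Fin m) ℝ)
    (𝒜 : Automaton N) : Prop :=
  ∀ σ : ℕ → Bool, 𝒜.Admissible σ → ∀ x₀ xf : Fin n → ℝ,
    ∃ u : ℕ → Fin m → ℝ, ∃ T : ℕ, traj A B σ u x₀ T = xf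

/-- Reachability of the system `(A, B, 𝒜)`. -/
def Reachable {N n m : ℕ} (A : Matrix (Fin n) (Fin n) ℝ) (B : Matrix (Fin n) (Fin m) ℝ)
    (𝒜 : Automaton N) : Prop :=
  ∀ σ : ℕ → Bool, 𝒜.Admissible σ → ∀ xf : Fin n → ℝ,
    ∃ u : ℕ → Fin m → ℝ, ∃ T : ℕ, traj A B σ u 0 T = xf

/-- 0-controllability of the system `(A, B, 𝒜)`. -/
def ZeroControllable {N n m : ℕ} (A : Matrix (Fin n) (Fin n) ℝ) (B : Matrix (Fin n) (Fin m) ℝ)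
    (𝒜 : Automaton N) : Prop :=
  ∀ σ : ℕ → Bool, 𝒜.Admissible σ → ∀ x₀ : Fin n → ℝ,
    ∃ u : ℕ → Fin m → ℝ, ∃ T : ℕ, traj A B σ u x₀ T = 0

/-- Stabilizability of the system `(A, B, 𝒜)`. -/
def Stabilizable {N n m : ℕ} (A : Matrix (Fin n) (Fin n) ℝ) (B : Matrix (Fin n) (Fin m) ℝ)
    (𝒜 : Automaton N) : Prop :=
  ∀ σ : ℕ → Bool, 𝒜.Admissible σ → ∀ x₀ : Fin n → ℝ,
    ∃ u : ℕ → Fin m → ℝ, Tendsto (fun t : ℕ => traj A B σ u x₀ t) atTop (nhds 0)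

/-- Practical controllability of the system `(A, B, 𝒜)`. -/
def PracticallyControllable {N n m : ℕ} (A : Matrix (Fin n) (Fin n) ℝ)
    (B : Matrix (Fin n) (Fin m) ℝ) (𝒜 : Automaton N) : Prop :=
  ∃ T : ℕ, ∀ σ : ℕ → Bool, 𝒜.Admissible σ → ∀ x₀ xf : Fin n → ℝ,
    ∃ u : ℕ → Fin m → ℝ, ∃ t : ℕ, t ≤ T ∧ traj A B σ u x₀ t = xf

/-- Practical reachability of the system `(A, B, 𝒜)`. -/
def PracticallyReachable {N n m : ℕ} (A : Matrix (Fin n) (Fin n) ℝ)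
    (B : Matrix (Fin n) (Fin m) ℝ) (𝒜 : Automaton N) : Prop :=
  ∃ T : ℕ, ∀ σ : ℕ → Bool, 𝒜.Admissible σ → ∀ xf : Fin n → ℝ,
    ∃ u : ℕ → Fin m → ℝ, ∃ t : ℕ, t ≤ T ∧ traj A B σ u 0 t = xf

/-- Practical 0-controllability of the system `(A, B, 𝒜)`. -/
def PracticallyZeroControllable {N n m : ℕ} (A : Matrix (Fin n) (Fin n) ℝ)
    (B : Matrix (Fin n) (Fin m) ℝ) (𝒜 : Automaton N) : Prop :=
  ∃ T : ℕ, ∀ σ : ℕ → Bool, 𝒜.Admissible σ → ∀ x₀ : Fin n → ℝ,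
    ∃ u : ℕ → Fin m → ℝ, ∃ t : ℕ, t ≤ T ∧ traj A B σ u x₀ t = 0

/-- The reachability matrix `C_σ(t) = [σ(t−1)B, σ(t−2)AB, ..., σ(0)A^{t−1}B]`
(block-column `i` is `σ(t−1−i) Aⁱ B`). -/
def reachMat {n m : ℕ} (A : Matrix (Fin n) (Fin n) ℝ) (B : Matrix (Fin n) (Fin m) ℝ)
    (σ : ℕ → Bool) (t : ℕ) : Matrix (Fin n) (Fin t × Fin m) ℝ :=
  fun k ij => if σ (t - 1 - (ij.1 : ℕ)) then (A ^ (ij.1 : ℕ) * B) k ij.2 else 0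

/-- State trajectory of the system with varying delays
`x(t+1) = A x(t) + Σ_{t' ≤ t, t' + d(t') = t} B u(t')`. -/
def delayTraj {n m : ℕ} (A : Matrix (Fin n) (Fin n) ℝ) (B : Matrix (Fin n) (Fin m) ℝ)
    (d : ℕ → ℕ) (u : ℕ → Fin m → ℝ) (x₀ : Fin n → ℝ) : ℕ → Fin n → ℝ
  | 0 => x₀
  | t + 1 => A.mulVec (delayTraj A B d u x₀ t) +
      ∑ t' ∈ Finset.range (t + 1), if t' + d t' = t then B.mulVec (u t') else 0

/-- Controllability of the system with varying delays `(A, B, 𝒟)`. -/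
def DelayControllable {n m : ℕ} (A : Matrix (Fin n) (Fin n) ℝ) (B : Matrix (Fin n) (Fin m) ℝ)
    (𝒟 : Finset ℕ) : Prop :=
  ∀ d : ℕ → ℕ, (∀ t : ℕ, d t ∈ 𝒟) → ∀ x₀ xf : Fin n → ℝ,
    ∃ u : ℕ → Fin m → ℝ, ∃ T : ℕ, delayTraj A B d u x₀ T = xf

/-- The controllability matrix `C̄_d(t)` of a system with varying delays: its `i`-th
block column (here indexed by `j = i - 1 : Fin t`) is `A^{t−i−d(i−1)} B` when
`i + d(i−1) ≤ t`, and the zero block otherwise. -/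
def delayCtrbMat {n m : ℕ} (A : Matrix (Fin n) (Fin n) ℝ) (B : Matrix (Fin n) (Fin m) ℝ)
    (d : ℕ → ℕ) (t : ℕ) : Matrix (Fin n) (Fin t × Fin m) ℝ :=
  fun k jl => if (jl.1 : ℕ) + 1 + d (jl.1 : ℕ) ≤ t
    then (A ^ (t - ((jl.1 : ℕ) + 1) - d (jl.1 : ℕ)) * B) k jl.2 else 0

-- The actuation signal `τ_d` of a delay signal `d`: `τ_d(t) = 1` iff there is
-- `t'` with `t' + d(t') = t`.
open Classical in
noncomputable def actuation (d : ℕ → ℕ) (t : ℕ) : Bool :=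
  if ∃ t' : ℕ, t' + d t' = t then true else false



open Matrix Filter

-- pick constant value along ultrafilter
lemma ultra_fix {α : Type*} [Finite α] [Nonempty α] (U : Ultrafilter ℕ) (f : ℕ → α) :
    ∃ b, {T | f T = b} ∈ U := by
  have : (⋃ b ∈ (Set.univ : Set α), {T | f T = b}) ∈ U := by
    have : (⋃ b ∈ (Set.univ : Set α), {T | f T = b}) = Set.univ := by
      ext T; simp
    rw [this]; exact Filter.univ_mem
  rcases (Ultrafilter.finite_biUnion_mem_iff Set.finite_univ).mp this with ⟨b, _, hb⟩
  exact ⟨b, hb⟩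

lemma exists_limit_signal {N : ℕ} (𝒜 : Automaton N) (σs : ℕ → ℕ → Bool)
    (h : ∀ T, 𝒜.Admissible (σs T)) :
    ∃ σ : ℕ → Bool, 𝒜.Admissible σ ∧
      ∀ T₀ : ℕ, ∃ T, T₀ ≤ T ∧ ∀ t ≤ T₀, σs T t = σ t := by
  choose vs hv using h
  have hN : Nonempty (Fin N) := ⟨vs 0 0⟩
  set U := Ultrafilter.of (atTop : Filter ℕ)
  choose v hvmem using fun t => ultra_fix U (fun T => vs T t)
  refine ⟨fun t => 𝒜.s (v t), ⟨v, fun t => ?_⟩, fun T₀ => ?_⟩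
  · have hmem : {T | vs T t = v t} ∩ {T | vs T (t+1) = v (t+1)} ∈ U :=
      Filter.inter_mem (hvmem t) (hvmem (t+1))
    rcases Filter.nonempty_of_mem hmem with ⟨T, h1, h2⟩
    constructor
    · rw [← h1, ← h2]; exact (hv T t).1
    · rfl
  · have hall : {T | ∀ t ≤ T₀, vs T t = v t} ∈ U := by
      have := (eventually_all_finite (Set.finite_Iic T₀)
        (l := (U : Filter ℕ)) (p := fun t T => vs T t = v t)).mpr
        (fun t _ => hvmem t)
      simpa [Set.mem_Iic, Filter.Eventually, Set.setOf_forall] using this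
    have hge : {T | T₀ ≤ T} ∈ U := Ultrafilter.of_le _ (Filter.mem_atTop T₀)
    rcases Filter.nonempty_of_mem (Filter.inter_mem hge hall) with ⟨T, h1, h2⟩
    exact ⟨T, h1, fun t ht => by rw [(hv T t).2, h2 t ht]⟩

lemma pow_mulVec_zero {n : ℕ} (A : Matrix (Fin n) (Fin n) ℝ) {x : Fin n → ℝ} {a b : ℕ}
    (hab : a ≤ b) (h : (A ^ a).mulVec x = 0) : (A ^ b).mulVec x = 0 := by
  have : A ^ b = A ^ (b - a) * A ^ a := by rw [← pow_add, Nat.sub_add_cancel hab]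
  rw [this, ← Matrix.mulVec_mulVec, h, Matrix.mulVec_zero]

/-- Practical observability is equivalent to observability, and practical
constructibility is equivalent to constructibility. -/
theorem practical_obs_constructible_iff {N n p : ℕ} (A : Matrix (Fin n) (Fin n) ℝ)
    (C : Matrix (Fin p) (Fin n) ℝ) (𝒜 : Automaton N) :
    (PracticallyObservable A C 𝒜 ↔ Observable A C 𝒜) ∧
    (PracticallyConstructible A C 𝒜 ↔ Constructible A C 𝒜) := by
  constructor
  · constructor
    · rintro ⟨T, h⟩ σ hσ x hx
      exact h σ hσ x fun t _ ht => hx t ht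
    · intro hobs
      by_contra hP
      unfold PracticallyObservable at hP
      push_neg at hP
      choose σs hadm xs hxs hne using hP
      obtain ⟨σ, hσ, hfreq⟩ := exists_limit_signal 𝒜 σs hadm
      set W : ℕ → Submodule ℝ (Fin n → ℝ) := fun T =>
        ⨅ t ∈ Set.Iic T, ⨅ (_ : σ t = true),
          LinearMap.ker ((C * A ^ t).mulVecLin) with hWdef
      have memW : ∀ (T : ℕ) (x : Fin n → ℝ), x ∈ W T ↔
          ∀ t ≤ T, σ t = true → (C * A ^ t).mulVec x = 0 := by
        intro T x
        simp [hWdef, Submodule.mem_iInf, Set.mem_Iic]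
      obtain ⟨T₀, hT₀⟩ := IsArtinian.monotone_stabilizes
        (⟨fun T => OrderDual.toDual (W T), fun T T' hle => by
          simp only [OrderDual.toDual_le_toDual]
          intro x hx
          rw [memW] at hx ⊢
          exact fun t ht hs => hx t (ht.trans hle) hs⟩ : ℕ →o (Submodule ℝ (Fin n → ℝ))ᵒᵈ)
      replace hT₀ : ∀ m, T₀ ≤ m → W T₀ = W m := fun m hm => hT₀ m hm
      obtain ⟨T, hTge, hTagree⟩ := hfreq T₀
      have hx0 : xs T ∈ W T₀ := (memW T₀ (xs T)).mpr fun t' ht' hs' =>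
        hxs T t' (ht'.trans hTge) (by rw [hTagree t' ht']; exact hs')
      have hxW : ∀ t, σ t = true → (C * A ^ t).mulVec (xs T) = 0 := by
        intro t hts
        have hmem : xs T ∈ W (max t T₀) := by
          rw [← hT₀ (max t T₀) (le_max_right _ _)]
          exact hx0
        exact (memW _ (xs T)).mp hmem t (le_max_left _ _) hts
      exact hne T (hobs σ hσ (xs T) hxW)
  · constructor
    · rintro ⟨T, h⟩ σ hσ
      exact ⟨T, h σ hσ⟩
    · intro hcon
      by_contra hP
      unfold PracticallyConstructible at hP
      push_neg at hP
      choose σs hadm xs hxs hne using hP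
      obtain ⟨σ, hσ, hfreq⟩ := exists_limit_signal 𝒜 σs hadm
      obtain ⟨T₁, hT₁⟩ := hcon σ hσ
      obtain ⟨T, hTge, hTagree⟩ := hfreq T₁
      have h0 : (A ^ T₁).mulVec (xs T) = 0 := by
        apply hT₁
        intro t ht hs
        exact hxs T t (ht.trans hTge) (by rw [hTagree t ht]; exact hs)
      exact hne T (pow_mulVec_zero A hTge h0)
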